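/- In the normal mean example with a-equation X = θ + Φ⁻¹(U), U ~ Uniform(0,1), and predictive random set S_ω(U) = [U - ωU, U + ω(1-U)] for ω ∈ [0,1], the weakened posterior belief and plausibility for the assertion A_θ = {Θ ≤ θ} are Bel_X(A_θ; S_ω) = max(0, 1 - Φ(X-θ)/(1-ω)) and Pl_X(A_θ; S_ω) = 1 - max(0, (Φ(X-θ) - ω)/(1-ω)), where Φ is the standard normal CDF. -/

import Mathlib

open MeasureTheory

lemma toReal_ofReal_max (x : ℝ) : (ENNReal.ofReal x).toReal = max 0 x := by
  rcases le_or_gt 0 x with h | h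
  · rw [ENNReal.toReal_ofReal h, max_eq_right h]
  · rw [ENNReal.ofReal_of_nonpos h.le, max_eq_left h.le, ENNReal.toReal_zero]

/-- belief and plausibility formulas in the normal mean example with
predictive random set `S_ω(U) = [U - ωU, U + ω(1-U)]`. -/
theorem normal_mean_belief_plausibility
    (Φ Φinv : ℝ → ℝ)
    (hΦmono : StrictMono Φ)
    (hΦrange : ∀ x : ℝ, Φ x ∈ Set.Ioo (0:ℝ) 1)
    (hinv₁ : ∀ u ∈ Set.Ioo (0:ℝ) 1, Φ (Φinv u) = u)
    (hinv₂ : ∀ x : ℝ, Φinv (Φ x) = x)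
    (X θ ω : ℝ) (hω : ω ∈ Set.Ioo (0:ℝ) 1)
    (μ : Measure ℝ) (hμ : μ = volume.restrict (Set.Ioo (0:ℝ) 1))
    (M : ℝ → Set ℝ)
    (hMdef : ∀ u, M u = Set.Icc (X - Φinv (u + ω * (1 - u))) (X - Φinv (u - ω * u)))
    (Bel : Set ℝ → ℝ) (hBel : ∀ A, Bel A = (μ {u | M u ⊆ A}).toReal) :
    Bel (Set.Iic θ) = max 0 (1 - Φ (X - θ) / (1 - ω)) ∧
    1 - Bel (Set.Iic θ)ᶜ = 1 - max 0 ((Φ (X - θ) - ω) / (1 - ω)) := by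
  obtain ⟨hω0, hω1⟩ := hω
  have h1ω : (0:ℝ) < 1 - ω := by linarith
  set p := Φ (X - θ) with hp
  have hp0 : 0 < p := (hΦrange _).1
  have hp1 : p < 1 := (hΦrange _).2
  have mem_lo : ∀ u ∈ Set.Ioo (0:ℝ) 1, u - ω * u ∈ Set.Ioo (0:ℝ) 1 := by
    rintro u ⟨h0, h1⟩
    constructor <;> nlinarith
  have mem_hi : ∀ u ∈ Set.Ioo (0:ℝ) 1, u + ω * (1 - u) ∈ Set.Ioo (0:ℝ) 1 := by
    rintro u ⟨h0, h1⟩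
    constructor <;> nlinarith
  have hle : ∀ u ∈ Set.Ioo (0:ℝ) 1,
      X - Φinv (u + ω * (1 - u)) ≤ X - Φinv (u - ω * u) := by
    rintro u hu
    have h2 : u - ω * u ≤ u + ω * (1 - u) := by nlinarith [hu.1, hu.2]
    have h3 := (hΦmono.le_iff_le (a := Φinv (u - ω * u)) (b := Φinv (u + ω * (1 - u))))
    rw [hinv₁ _ (mem_lo u hu), hinv₁ _ (mem_hi u hu)] at h3
    linarith [h3.mp h2]
  constructor
  · rw [hBel, hμ, Measure.restrict_apply' measurableSet_Ioo]
    have hset : {u | M u ⊆ Set.Iic θ} ∩ Set.Ioo 0 1 = Set.Ico (p / (1 - ω)) 1 := by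
      ext u
      simp only [Set.mem_inter_iff, Set.mem_setOf_eq, Set.mem_Ioo, Set.mem_Ico]
      constructor
      · rintro ⟨hsub, hu⟩
        rw [hMdef] at hsub
        have h1 := (Set.Icc_subset_Iic_iff (hle u hu)).mp hsub
        have h3 : Φ (X - θ) ≤ Φ (Φinv (u - ω * u)) := hΦmono.monotone (by linarith)
        rw [hinv₁ _ (mem_lo u hu)] at h3
        refine ⟨?_, hu.2⟩
        rw [div_le_iff₀ h1ω]
        nlinarith
      · rintro ⟨hc, hu1⟩
        have hcpos : 0 < p / (1 - ω) := div_pos hp0 h1ω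
        have hu : u ∈ Set.Ioo (0:ℝ) 1 := ⟨lt_of_lt_of_le hcpos hc, hu1⟩
        refine ⟨?_, hu⟩
        rw [hMdef]
        apply (Set.Icc_subset_Iic_iff (hle u hu)).mpr
        rw [div_le_iff₀ h1ω] at hc
        have h2 : p ≤ u - ω * u := by nlinarith
        have h3 := (hΦmono.le_iff_le (a := X - θ) (b := Φinv (u - ω * u)))
        rw [hinv₁ _ (mem_lo u hu)] at h3
        linarith [h3.mp h2]
    rw [hset, Real.volume_Ico, toReal_ofReal_max]
  · have hcompl : (Set.Iic θ)ᶜ = Set.Ioi θ := Set.compl_Iic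
    rw [hcompl, hBel, hμ, Measure.restrict_apply' measurableSet_Ioo]
    have hd1 : (p - ω) / (1 - ω) < 1 := by
      rw [div_lt_one h1ω]; linarith
    have hset : {u | M u ⊆ Set.Ioi θ} ∩ Set.Ioo 0 1 = Set.Ioo 0 ((p - ω) / (1 - ω)) := by
      ext u
      simp only [Set.mem_inter_iff, Set.mem_setOf_eq, Set.mem_Ioo]
      constructor
      · rintro ⟨hsub, hu⟩
        rw [hMdef] at hsub
        have h1 := (Set.Icc_subset_Ioi_iff (hle u hu)).mp hsub
        -- θ < X - Φinv (u + ω*(1-u))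
        have h2 : Φ (Φinv (u + ω * (1 - u))) < Φ (X - θ) := hΦmono (by linarith)
        rw [hinv₁ _ (mem_hi u hu)] at h2
        refine ⟨hu.1, ?_⟩
        rw [lt_div_iff₀ h1ω]
        nlinarith
      · rintro ⟨hu0, hud⟩
        have hu : u ∈ Set.Ioo (0:ℝ) 1 := ⟨hu0, hud.trans hd1⟩
        refine ⟨?_, hu⟩
        rw [hMdef]
        apply (Set.Icc_subset_Ioi_iff (hle u hu)).mpr
        rw [lt_div_iff₀ h1ω] at hud
        have h2 : u + ω * (1 - u) < p := by nlinarith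
        have h3 := (hΦmono.lt_iff_lt (a := Φinv (u + ω * (1 - u))) (b := X - θ))
        rw [hinv₁ _ (mem_hi u hu)] at h3
        linarith [h3.mp h2]
    rw [hset, Real.volume_Ioo, toReal_ofReal_max]
    congr 2
    ring
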